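/- arXiv:2101.01446 — 5 statements merged into one kernel-verified Lean document; each statement's English description precedes it below -/
import Mathlib

section
/- If A is a commutative algebra of finite type over a noetherian subring B contained in A^G, where G is a finite group acting on A by B-algebra automorphisms, then A^G is a B-algebra of finite type; in particular A^G is noetherian and A is a finite A^G-module. -/
/-- The subring `A^G` of `G`-invariant elements of `A`. -/
def fixedSubring (G A : Type*) [Group G] [CommRing A] [MulSemiringAction G A] : Subring A where
  carrier := {a | ∀ g : G, g • a = a}
  zero_mem' := by intro g; simp
  one_mem' := by intro g; simp
  add_mem' := by intro a b ha hb g; rw [smul_add, ha g, hb g]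
  mul_mem' := by intro a b ha hb g; rw [smul_mul', ha g, hb g]
  neg_mem' := by intro a ha g; rw [smul_neg, ha g]

/-- If `A` is a commutative algebra of finite type over a noetherian subring
`B ⊆ A^G`, where the finite group `G` acts on `A` by `B`-algebra automorphisms, then `A^G` is a
`B`-algebra of finite type; in particular `A^G` is noetherian and `A` is a finite
`A^G`-module. -/
theorem fixedSubring_finiteType (G A : Type*) [Group G] [Finite G] [CommRing A]
    [MulSemiringAction G A] (B : Subring A) (hB : B ≤ fixedSubring G A)
    (hnoeth : IsNoetherianRing B) (hft : RingHom.FiniteType B.subtype) :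
    RingHom.FiniteType (Subring.inclusion hB) ∧
      IsNoetherianRing (fixedSubring G A) ∧
      RingHom.Finite (fixedSubring G A).subtype := by
  cases nonempty_fintype G
  set K := fixedSubring G A with hK
  -- A is integral over K
  have hint : (K.subtype).IsIntegral := by
    intro x
    refine ⟨(prodXSubSMul G A x).toSubring K fun c hc => ?_, ?_, ?_⟩
    · rcases Polynomial.mem_coeffs_iff.1 hc with ⟨n, -, rfl⟩
      exact fun g => prodXSubSMul.coeff G A x g n
    · exact (Polynomial.monic_toSubring _ _ _).2 (prodXSubSMul.monic G A x)
    · rw [Polynomial.eval₂_eq_eval_map]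
      exact (congrArg (Polynomial.eval x) (Polynomial.map_toSubring _ K _)).trans
        (prodXSubSMul.eval G A x)
  have hcomp : B.subtype = K.subtype.comp (Subring.inclusion hB) := rfl
  have hftK : (K.subtype).FiniteType := by
    rw [hcomp] at hft
    exact RingHom.FiniteType.of_comp_finiteType hft
  have hfin : (K.subtype).Finite :=
    RingHom.finite_iff_isIntegral_and_finiteType.2 ⟨hint, hftK⟩
  -- Artin--Tate
  letI : Algebra B A := B.subtype.toAlgebra
  letI : Algebra K A := K.subtype.toAlgebra
  letI : Algebra B K := (Subring.inclusion hB).toAlgebra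
  haveI : IsScalarTower B K A := IsScalarTower.of_algebraMap_eq fun _ => rfl
  have hAC : (⊤ : Subalgebra B A).FG := hft.1
  have hBC : (⊤ : Submodule K A).FG := hfin.1
  have hBK : (⊤ : Subalgebra B K).FG :=
    fg_of_fg_of_fg B K A hAC hBC Subtype.val_injective
  have h1 : RingHom.FiniteType (Subring.inclusion hB) := ⟨hBK⟩
  haveI : Algebra.FiniteType B K := ⟨hBK⟩
  exact ⟨h1, Algebra.FiniteType.isNoetherianRing B K, hfin⟩
end

section
/- If A is a finitely generated commutative ring (i.e., a finitely generated ℤ-algebra) with an action of a finite group G, then A^G is a finitely generated ring, A^G is noetherian, and A is a finite A^G-module. -/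
theorem fixedSubring_isIntegral (G A : Type*) [Group G] [Finite G] [CommRing A]
    [MulSemiringAction G A] : Algebra.IsIntegral (fixedSubring G A) A := by
  cases nonempty_fintype G
  refine ⟨fun x => ?_⟩
  refine ⟨(prodXSubSMul G A x).toSubring (fixedSubring G A) ?_, ?_, ?_⟩
  · intro c hc g
    obtain ⟨n, _, hn⟩ := Polynomial.mem_coeffs_iff.1 hc
    exact hn ▸ prodXSubSMul.coeff G A x g n
  · refine (Polynomial.monic_toSubring ..).mpr ?_
    exact prodXSubSMul.monic G A x
  · rw [← prodXSubSMul.eval G A x, Polynomial.eval₂_eq_eval_map]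
    congr 1
    exact Polynomial.map_toSubring _ _ _

/-- If `A` is a finitely generated commutative ring (i.e. a finitely generated
`ℤ`-algebra) with an action of a finite group `G`, then `A^G` is a finitely generated ring,
`A^G` is noetherian, and `A` is a finite `A^G`-module. -/
theorem fixedSubring_finiteType_of_finiteType (G A : Type*) [Group G] [Finite G] [CommRing A]
    [MulSemiringAction G A] (hA : Algebra.FiniteType ℤ A) :
    Algebra.FiniteType ℤ (fixedSubring G A) ∧
      IsNoetherianRing (fixedSubring G A) ∧
      RingHom.Finite (fixedSubring G A).subtype := by
  have hint := fixedSubring_isIntegral G A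
  have hft : Algebra.FiniteType (fixedSubring G A) A :=
    Algebra.FiniteType.of_restrictScalars_finiteType ℤ (fixedSubring G A) A
  have hfin : Module.Finite (fixedSubring G A) A := Algebra.IsIntegral.finite
  have hB : (⊤ : Subalgebra ℤ (fixedSubring G A)).FG :=
    fg_of_fg_of_fg ℤ (fixedSubring G A) A hA.1 hfin.1
      Subtype.val_injective
  have hFT : Algebra.FiniteType ℤ (fixedSubring G A) := ⟨hB⟩
  refine ⟨hFT, Algebra.FiniteType.isNoetherianRing ℤ (fixedSubring G A), hfin⟩
end

section
/- Let G be a finite group acting on a commutative ring A, and let B = A/I for a G-stable ideal I of A. Then the natural ring homomorphism A^G/I^G → B^G (where I^G = I ∩ A^G) is injective and integral, and the induced map Spec(B^G) → Spec(A^G/I^G) is a bijection; moreover all induced residue field extensions are purely inseparable, so the map is a universal homeomorphism. -/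
open scoped TensorProduct
set_option synthInstance.maxHeartbeats 400000
set_option maxHeartbeats 1000000

open Polynomial in
private lemma coeffPow {L : Type*} [CommRing L] (c : L) (N m : ℕ) (hN : 0 < N) (hm : 0 < m) :
    ((X ^ N - C c) ^ m).coeff (N * (m - 1)) = -((m : L) * c) := by
  have h1 : (X ^ N - C c) ^ m
      = ∑ k ∈ Finset.range (m + 1), C ((-c) ^ (m - k) * (m.choose k : L)) * X ^ (N * k) := by
    rw [sub_eq_add_neg, ← C_neg, add_pow]
    refine Finset.sum_congr rfl fun k _ => ?_
    rw [map_mul, C_pow, Polynomial.C_eq_natCast, pow_mul]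
    ring
  rw [h1, finset_sum_coeff]
  rw [Finset.sum_eq_single (m - 1)]
  · rw [coeff_C_mul, coeff_X_pow, if_pos rfl, mul_one]
    have h2 : m - (m - 1) = 1 := by omega
    obtain ⟨m', rfl⟩ : ∃ m', m = m' + 1 := ⟨m - 1, by omega⟩
    rw [h2, pow_one, Nat.add_sub_cancel, Nat.choose_succ_self_right]
    push_cast
    ring
  · intro k _ hne
    rw [coeff_C_mul, coeff_X_pow, if_neg, mul_zero]
    intro h
    exact hne (Nat.eq_of_mul_eq_mul_left hN h).symm
  · intro h
    exact absurd (Finset.mem_range.2 (by omega)) h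

open Polynomial in
private lemma lemA {L : Type*} [Field L] (q : ℕ) [hq : ExpChar L q] {n : ℕ} (hn : 0 < n) :
    ∃ e m : ℕ, 0 < m ∧ n = q ^ e * m ∧ IsUnit ((m : L)) ∧
      ∀ a : L, ((X - C a) ^ n).coeff (q ^ e * (m - 1)) = -((m : L) * a ^ q ^ e) := by
  rcases hq with _ | hp
  · refine ⟨0, n, hn, by simp, isUnit_iff_ne_zero.2 (Nat.cast_ne_zero.2 hn.ne'), fun a => ?_⟩
    have h := coeffPow (L := L) a 1 n one_pos hn
    simpa [pow_one] using h
  · refine ⟨n.factorization q, n / q ^ n.factorization q, Nat.ordCompl_pos q hn.ne',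
      (Nat.ordProj_mul_ordCompl_eq_self n q).symm, ?_, fun a => ?_⟩
    · refine isUnit_iff_ne_zero.2 fun h => ?_
      exact Nat.not_dvd_ordCompl hp hn.ne' ((CharP.cast_eq_zero_iff L q _).1 h)
    · have hpe : 0 < q ^ n.factorization q := pow_pos hp.pos _
      haveI : ExpChar L[X] q := ExpChar.prime hp
      have hsplit : (X - C a) ^ n
          = (X ^ (q ^ n.factorization q) - C (a ^ q ^ n.factorization q))
            ^ (n / q ^ n.factorization q) := by
        conv_lhs => rw [← Nat.ordProj_mul_ordCompl_eq_self n q]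
        rw [pow_mul, sub_pow_expChar_pow, ← C_pow]
      rw [hsplit]
      exact coeffPow _ _ _ hpe (Nat.ordCompl_pos q hn.ne')

open Polynomial in
private lemma lemA_inj {L : Type*} [Field L] (q : ℕ) [ExpChar L q] {n : ℕ} (hn : 0 < n)
    {a b : L} (h : (X - C a) ^ n = (X - C b) ^ n) : a = b := by
  obtain ⟨e, m, _, -, hu, hco⟩ := lemA (L := L) q hn
  have h1 : -((m : L) * a ^ q ^ e) = -((m : L) * b ^ q ^ e) := by
    rw [← hco a, ← hco b, h]
  have h2 : a ^ q ^ e = b ^ q ^ e :=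
    mul_left_cancel₀ hu.ne_zero (neg_injective h1)
  have h3 : (a - b) ^ q ^ e = 0 := by
    rw [sub_pow_expChar_pow, h2, sub_self]
  have hq0 : q ^ e ≠ 0 := pow_ne_zero _ (expChar_pos L q).ne'
  have h4 := pow_eq_zero_iff hq0 |>.1 h3
  exact sub_eq_zero.1 h4

open Polynomial in
private lemma lemA_mem {L : Type*} [Field L] (q : ℕ) [ExpChar L q] {n : ℕ} (hn : 0 < n) :
    ∃ e : ℕ, ∀ (k' : Subfield L) (a : L),
      (∀ i, ((X - C a) ^ n).coeff i ∈ k') → a ^ q ^ e ∈ k' := by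
  obtain ⟨e, m, _, -, hu, hco⟩ := lemA (L := L) q hn
  refine ⟨e, fun k' a h => ?_⟩
  have h1 : -((m : L) * a ^ q ^ e) ∈ k' := hco a ▸ h _
  have h2 : (m : L) * a ^ q ^ e ∈ k' := by simpa using k'.neg_mem h1
  have h3 : ((m : L))⁻¹ ∈ k' := k'.inv_mem (natCast_mem k' m)
  have h4 := k'.mul_mem h3 h2
  rwa [inv_mul_cancel_left₀ hu.ne_zero] at h4

/-- The residue field of a commutative ring at a prime ideal. -/
noncomputable def residueAt (R : Type*) [CommRing R] (p : Ideal R) [p.IsPrime] : Type _ :=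
  IsLocalRing.ResidueField (Localization.AtPrime p)

noncomputable instance (R : Type*) [CommRing R] (p : Ideal R) [p.IsPrime] :
    Field (residueAt R p) :=
  inferInstanceAs (Field (IsLocalRing.ResidueField (Localization.AtPrime p)))

/-- The induced map of residue fields associated to a ring homomorphism and a prime of the
target. -/
noncomputable def residueMap {R S : Type*} [CommRing R] [CommRing S] (f : R →+* S)
    (Q : Ideal S) [Q.IsPrime] :
    (haveI : (Q.comap f).IsPrime := Ideal.IsPrime.comap f
     residueAt R (Q.comap f)) →+* residueAt S Q :=
  haveI : (Q.comap f).IsPrime := Ideal.IsPrime.comap f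
  haveI := Localization.isLocalHom_localRingHom (Q.comap f) Q f rfl
  IsLocalRing.ResidueField.map (Localization.localRingHom (Q.comap f) Q f rfl)

/-- Purely inseparable residue field extensions, in the generic situation. -/
private lemma part4 {R S : Type*} [CommRing R] [CommRing S] (φ : R →+* S) {n : ℕ} (hn : 0 < n)
    (hKEY : ∀ s : S, ∃ P : Polynomial R,
      P.Monic ∧ P.map φ = (Polynomial.X - Polynomial.C s) ^ n)
    (Q : Ideal S) (hQ : Q.IsPrime) :
    letI := hQ
    letI : Algebra (residueAt _ (Q.comap φ)) (residueAt _ Q) := (residueMap φ Q).toAlgebra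
    IsPurelyInseparable (residueAt _ (Q.comap φ)) (residueAt _ Q) := by
  haveI := hQ
  haveI hQc : (Q.comap φ).IsPrime := Ideal.IsPrime.comap φ
  letI : Algebra (residueAt _ (Q.comap φ)) (residueAt _ Q) := (residueMap φ Q).toAlgebra
  set k := residueAt R (Q.comap φ)
  set l := residueAt S Q
  obtain ⟨q, hq⟩ := ExpChar.exists k
  haveI := hq
  haveI : ExpChar l q := expChar_of_injective_ringHom (algebraMap k l).injective q
  rw [isPurelyInseparable_iff_pow_mem _ q]
  set fS : S →+* l :=
    (IsLocalRing.residue (Localization.AtPrime Q)).comp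
      (algebraMap S (Localization.AtPrime Q)) with hfS
  set fR : R →+* k :=
    (IsLocalRing.residue (Localization.AtPrime (Q.comap φ))).comp
      (algebraMap R (Localization.AtPrime (Q.comap φ))) with hfR
  have hsq : ∀ r, algebraMap k l (fR r) = fS (φ r) := by
    intro r
    show residueMap φ Q (fR r) = fS (φ r)
    haveI := Localization.isLocalHom_localRingHom (Q.comap φ) Q φ rfl
    show IsLocalRing.ResidueField.map (Localization.localRingHom (Q.comap φ) Q φ rfl)
        (IsLocalRing.residue _ (algebraMap _ _ r)) = _
    rw [IsLocalRing.ResidueField.map_residue, Localization.localRingHom_to_map]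
    rfl
  set k' : Subfield l := (algebraMap k l).fieldRange with hk'
  obtain ⟨e, he⟩ := lemA_mem (L := l) q hn
  have helem : ∀ s : S, (fS s) ^ q ^ e ∈ k' := by
    intro s
    obtain ⟨P, hPm, hPmap⟩ := hKEY s
    refine he k' (fS s) ?_
    intro i
    have hmap2 : P.map (fS.comp φ) = (Polynomial.X - Polynomial.C (fS s)) ^ n := by
      rw [← Polynomial.map_map, hPmap, Polynomial.map_pow, Polynomial.map_sub,
        Polynomial.map_X, Polynomial.map_C]
    rw [← hmap2, Polynomial.coeff_map]
    exact ⟨fR (P.coeff i), hsq _⟩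
  intro x
  obtain ⟨z, hz⟩ := Ideal.Quotient.mk_surjective
    (I := IsLocalRing.maximalIdeal (Localization.AtPrime Q)) x
  obtain ⟨⟨s, t⟩, hst⟩ := IsLocalization.surj (M := Q.primeCompl) z
  have hx1 : x * fS t = fS s := by
    rw [← hz]
    have h := congrArg (IsLocalRing.residue (Localization.AtPrime Q)) hst
    rw [map_mul] at h
    exact h
  have hunit : IsUnit (fS t) := by
    have h1 : IsUnit (algebraMap S (Localization.AtPrime Q) t) :=
      IsLocalization.map_units _ t
    exact h1.map (IsLocalRing.residue (Localization.AtPrime Q))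
  have hx2 : x = fS s * (fS t)⁻¹ := (eq_mul_inv_iff_mul_eq₀ hunit.ne_zero).2 hx1
  refine ⟨e, ?_⟩
  have hmem : x ^ q ^ e ∈ k' := by
    rw [hx2, mul_pow, inv_pow]
    exact k'.mul_mem (helem s) (k'.inv_mem (helem t))
  obtain ⟨y, hy⟩ := hmem
  exact ⟨y, hy⟩

/-- Two homomorphisms to a common field with prescribed kernels lying over the same prime. -/
private lemma exists_two_homs {C : Type u_c} {T : Type u_t} [CommRing C] [CommRing T] (ι : C →+* T)
    (Q1 Q2 : Ideal T) (h1 : Q1.IsPrime) (h2 : Q2.IsPrime) (hco : Q1.comap ι = Q2.comap ι) :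
    ∃ (L : Type u_t) (_ : Field L) (u1 u2 : T →+* L),
      u1.comp ι = u2.comp ι ∧ RingHom.ker u1 = Q1 ∧ RingHom.ker u2 = Q2 := by
  haveI := h1
  haveI := h2
  haveI : (Q1.comap ι).IsPrime := Ideal.IsPrime.comap ι
  have hm1 : Function.Injective ((algebraMap (T ⧸ Q1) (FractionRing (T ⧸ Q1))).comp
      (Ideal.quotientMap Q1 ι le_rfl)) :=
    (IsFractionRing.injective _ _).comp (Ideal.quotientMap_injective' (H := le_rfl) le_rfl)
  have hm2 : Function.Injective ((algebraMap (T ⧸ Q2) (FractionRing (T ⧸ Q2))).comp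
      (Ideal.quotientMap Q2 ι (le_of_eq hco))) :=
    (IsFractionRing.injective _ _).comp
      (Ideal.quotientMap_injective' (H := le_of_eq hco) (le_of_eq hco.symm))
  set K := FractionRing (C ⧸ Q1.comap ι)
  set F1 := FractionRing (T ⧸ Q1)
  set F2 := FractionRing (T ⧸ Q2)
  letI : Algebra K F1 := (IsFractionRing.lift hm1).toAlgebra
  letI : Algebra K F2 := (IsFractionRing.lift hm2).toAlgebra
  haveI : Nontrivial (F1 ⊗[K] F2) := by
    obtain ⟨i⟩ := Module.Basis.index_nonempty (Module.Basis.ofVectorSpace K F1)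
    obtain ⟨j⟩ := Module.Basis.index_nonempty (Module.Basis.ofVectorSpace K F2)
    exact nontrivial_of_ne (((Module.Basis.ofVectorSpace K F1).tensorProduct
      (Module.Basis.ofVectorSpace K F2)) (i, j)) 0 (Module.Basis.ne_zero _ _)
  obtain ⟨M, hM⟩ := Ideal.exists_maximal (F1 ⊗[K] F2)
  haveI := hM
  set L := (F1 ⊗[K] F2) ⧸ M
  haveI : Nontrivial L := Ideal.Quotient.nontrivial_iff.mpr hM.ne_top
  set θ1 : F1 →+* L := (Ideal.Quotient.mk M).comp
    (Algebra.TensorProduct.includeLeftRingHom (R := K) (A := F1) (B := F2)) with hθ1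
  set θ2 : F2 →+* L := (Ideal.Quotient.mk M).comp
    (Algebra.TensorProduct.includeRight (R := K) (A := F1) (B := F2)).toRingHom with hθ2
  set u1 : T →+* L := (θ1.comp (algebraMap (T ⧸ Q1) F1)).comp (Ideal.Quotient.mk Q1) with hu1
  set u2 : T →+* L := (θ2.comp (algebraMap (T ⧸ Q2) F2)).comp (Ideal.Quotient.mk Q2) with hu2
  refine ⟨L, Ideal.Quotient.field M, u1, u2, ?_, ?_, ?_⟩
  · refine RingHom.ext fun c => ?_
    have e1 : Ideal.Quotient.mk Q1 (ι c)
        = Ideal.quotientMap Q1 ι le_rfl (Ideal.Quotient.mk (Q1.comap ι) c) :=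
      (Ideal.quotientMap_mk).symm
    have e2 : Ideal.Quotient.mk Q2 (ι c)
        = Ideal.quotientMap Q2 ι (le_of_eq hco) (Ideal.Quotient.mk (Q1.comap ι) c) :=
      (Ideal.quotientMap_mk).symm
    show θ1 (algebraMap (T ⧸ Q1) F1 (Ideal.Quotient.mk Q1 (ι c)))
      = θ2 (algebraMap (T ⧸ Q2) F2 (Ideal.Quotient.mk Q2 (ι c)))
    rw [e1, e2]
    have e3 : algebraMap (T ⧸ Q1) F1
        (Ideal.quotientMap Q1 ι le_rfl (Ideal.Quotient.mk (Q1.comap ι) c))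
        = algebraMap K F1 (algebraMap (C ⧸ Q1.comap ι) K (Ideal.Quotient.mk (Q1.comap ι) c)) :=
      (IsFractionRing.lift_algebraMap hm1 _).symm
    have e4 : algebraMap (T ⧸ Q2) F2
        (Ideal.quotientMap Q2 ι (le_of_eq hco) (Ideal.Quotient.mk (Q1.comap ι) c))
        = algebraMap K F2 (algebraMap (C ⧸ Q1.comap ι) K (Ideal.Quotient.mk (Q1.comap ι) c)) :=
      (IsFractionRing.lift_algebraMap hm2 _).symm
    rw [e3, e4]
    show Ideal.Quotient.mk M (Algebra.TensorProduct.includeLeftRingHom _)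
      = Ideal.Quotient.mk M (Algebra.TensorProduct.includeRight _)
    congr 1
    rw [show (Algebra.TensorProduct.includeLeftRingHom (R := K) (A := F1) (B := F2))
          (algebraMap K F1 (algebraMap (C ⧸ Q1.comap ι) K (Ideal.Quotient.mk (Q1.comap ι) c)))
        = (Algebra.TensorProduct.includeLeft (R := K) (A := F1) (B := F2) (S := K))
          (algebraMap K F1 (algebraMap (C ⧸ Q1.comap ι) K (Ideal.Quotient.mk (Q1.comap ι) c)))
        from rfl,
      AlgHom.commutes, AlgHom.commutes]
  · have hinj1 : Function.Injective (⇑θ1 ∘ ⇑(algebraMap (T ⧸ Q1) F1)) :=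
      θ1.injective.comp (IsFractionRing.injective _ _)
    ext t
    constructor
    · intro ht
      have ht' : u1 t = 0 := ht
      have h0 : Ideal.Quotient.mk Q1 t = 0 := by
        apply hinj1
        show θ1 (algebraMap (T ⧸ Q1) F1 (Ideal.Quotient.mk Q1 t))
          = θ1 (algebraMap (T ⧸ Q1) F1 0)
        rw [map_zero, map_zero]
        exact ht'
      exact (Ideal.Quotient.eq_zero_iff_mem).1 h0
    · intro ht
      show (θ1.comp (algebraMap (T ⧸ Q1) F1)) (Ideal.Quotient.mk Q1 t) = 0
      rw [(Ideal.Quotient.eq_zero_iff_mem).2 ht]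
      simp
  · have hinj2 : Function.Injective (⇑θ2 ∘ ⇑(algebraMap (T ⧸ Q2) F2)) :=
      θ2.injective.comp (IsFractionRing.injective _ _)
    ext t
    constructor
    · intro ht
      have ht' : u2 t = 0 := ht
      have h0 : Ideal.Quotient.mk Q2 t = 0 := by
        apply hinj2
        show θ2 (algebraMap (T ⧸ Q2) F2 (Ideal.Quotient.mk Q2 t))
          = θ2 (algebraMap (T ⧸ Q2) F2 0)
        rw [map_zero, map_zero]
        exact ht'
      exact (Ideal.Quotient.eq_zero_iff_mem).1 h0
    · intro ht
      show (θ2.comp (algebraMap (T ⧸ Q2) F2)) (Ideal.Quotient.mk Q2 t) = 0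
      rw [(Ideal.Quotient.eq_zero_iff_mem).2 ht]
      simp

/-- A pair of compatible homomorphisms to an algebraically closed field over a prime of `C`. -/
private lemma exists_hom_pair {R S : Type*} [CommRing R] [CommRing S] (φ : R →+* S)
    (hInj : Function.Injective φ) (hInt : φ.IsIntegral)
    {C : Type u_c} [CommRing C] (g : R →+* C) (q : Ideal C) (hq : q.IsPrime) :
    ∃ (Ω : Type u_c) (_ : Field Ω) (β : S →+* Ω) (v : C →+* Ω),
      β.comp φ = v.comp g ∧ RingHom.ker v = q := by
  haveI := hq
  letI : Algebra R S := φ.toAlgebra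
  haveI : Algebra.IsIntegral R S := ⟨hInt⟩
  set K := FractionRing (C ⧸ q)
  set Ω := AlgebraicClosure K
  set v : C →+* Ω :=
    ((algebraMap K Ω).comp (algebraMap (C ⧸ q) K)).comp (Ideal.Quotient.mk q) with hv
  have hkerv : RingHom.ker v = q := by
    ext c
    constructor
    · intro hc
      have h0 : ((algebraMap K Ω).comp (algebraMap (C ⧸ q) K)) (Ideal.Quotient.mk q c) = 0 := hc
      have hinjv : Function.Injective ((algebraMap K Ω).comp (algebraMap (C ⧸ q) K)) :=
        (algebraMap K Ω).injective.comp (IsFractionRing.injective _ _)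
      have hmk : Ideal.Quotient.mk q c = 0 := by
        apply hinjv
        rw [map_zero]
        exact h0
      exact (Ideal.Quotient.eq_zero_iff_mem).1 hmk
    · intro hc
      show ((algebraMap K Ω).comp (algebraMap (C ⧸ q) K)) (Ideal.Quotient.mk q c) = 0
      rw [(Ideal.Quotient.eq_zero_iff_mem).2 hc]
      simp
  set vg : R →+* Ω := v.comp g with hvg
  haveI hkp : (RingHom.ker vg).IsPrime := RingHom.ker_isPrime vg
  obtain ⟨Q, -, hQp, hQc⟩ := Ideal.exists_ideal_over_prime_of_isIntegral
    (R := R) (S := S) (RingHom.ker vg) ⊥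
    (by
      intro r hr
      have hr1 : φ r = 0 := by simp only [Ideal.mem_comap, Ideal.mem_bot] at hr; exact hr
      have hr2 : r = 0 := hInj (by simpa using hr1)
      simp [hr2])
  haveI := hQp
  have hQc' : Q.comap φ = RingHom.ker vg := hQc
  haveI : (Q.comap φ).IsPrime := Ideal.IsPrime.comap φ
  set ρ : (R ⧸ Q.comap φ) →+* (S ⧸ Q) := Ideal.quotientMap Q φ le_rfl with hρ
  letI : Algebra (R ⧸ Q.comap φ) (S ⧸ Q) := ρ.toAlgebra
  haveI : Algebra.IsIntegral (R ⧸ Q.comap φ) (S ⧸ Q) := ⟨hInt.quotient⟩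
  haveI : Module.IsTorsionFree (R ⧸ Q.comap φ) (S ⧸ Q) :=
    Module.isTorsionFree_iff_algebraMap_injective.2 (Ideal.quotientMap_injective' (H := le_rfl) le_rfl)
  set vΩ : (R ⧸ Q.comap φ) →+* Ω := Ideal.Quotient.lift (Q.comap φ) vg
    (fun r hr => by rw [hQc'] at hr; exact hr) with hvΩ
  have hvΩinj : Function.Injective vΩ := by
    rw [injective_iff_map_eq_zero]
    intro a ha
    obtain ⟨r, rfl⟩ := Ideal.Quotient.mk_surjective a
    have ha1 : vg r = 0 := ha
    have hr : r ∈ Q.comap φ := by rw [hQc']; exact ha1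
    exact (Ideal.Quotient.eq_zero_iff_mem).2 hr
  letI : Algebra (R ⧸ Q.comap φ) Ω := vΩ.toAlgebra
  haveI : Module.IsTorsionFree (R ⧸ Q.comap φ) Ω :=
    Module.isTorsionFree_iff_algebraMap_injective.2 hvΩinj
  haveI : Algebra.IsAlgebraic (R ⧸ Q.comap φ) (S ⧸ Q) :=
    ⟨fun x => (Algebra.IsIntegral.isIntegral x).isAlgebraic⟩
  set ψ : (S ⧸ Q) →ₐ[R ⧸ Q.comap φ] Ω := IsAlgClosed.lift with hψ
  set β : S →+* Ω := (ψ.toRingHom).comp (Ideal.Quotient.mk Q) with hβ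
  have hβφ : ∀ r, β (φ r) = vg r := by
    intro r
    show ψ (Ideal.Quotient.mk Q (φ r)) = vg r
    have e1 : Ideal.Quotient.mk Q (φ r) = ρ (Ideal.Quotient.mk (Q.comap φ) r) :=
      (Ideal.quotientMap_mk).symm
    rw [e1]
    have e2 : ρ (Ideal.Quotient.mk (Q.comap φ) r)
        = algebraMap (R ⧸ Q.comap φ) (S ⧸ Q) (Ideal.Quotient.mk (Q.comap φ) r) := rfl
    rw [e2, ψ.commutes]
    rfl
  exact ⟨Ω, inferInstance, β, v, RingHom.ext hβφ, hkerv⟩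

/-- Universal homeomorphism on spectra, in the generic situation. -/
private lemma part5 {R S : Type*} [CommRing R] [CommRing S] (φ : R →+* S) {n : ℕ} (hn : 0 < n)
    (hKEY : ∀ s : S, ∃ P : Polynomial R,
      P.Monic ∧ P.map φ = (Polynomial.X - Polynomial.C s) ^ n)
    (hInj : Function.Injective φ) (hInt : φ.IsIntegral)
    (C : Type*) [CommRing C] (g : R →+* C) :
    letI : Algebra R C := g.toAlgebra
    letI : Algebra R S := φ.toAlgebra
    IsHomeomorph (PrimeSpectrum.comap
      (Algebra.TensorProduct.includeRight (R := R) (A := S) (B := C)).toRingHom) := by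
  letI : Algebra R C := g.toAlgebra
  letI : Algebra R S := φ.toAlgebra
  set ι : C →+* (S ⊗[R] C) :=
    (Algebra.TensorProduct.includeRight (R := R) (A := S) (B := C)).toRingHom with hι
  -- generators satisfy the key property
  have hGen : ∀ s : S, ∃ PC : Polynomial C, PC.Monic ∧
      PC.map ι = (Polynomial.X - Polynomial.C (s ⊗ₜ[R] (1 : C))) ^ n := by
    intro s
    obtain ⟨P, hPm, hPmap⟩ := hKEY s
    refine ⟨P.map (algebraMap R C), hPm.map _, ?_⟩
    rw [Polynomial.map_map]
    have hcomm : ι.comp (algebraMap R C)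
        = (Algebra.TensorProduct.includeLeftRingHom (R := R) (A := S) (B := C)).comp φ :=
      (Algebra.TensorProduct.includeLeftRingHom_comp_algebraMap (R := R) (A := S) (B := C)).symm
    rw [hcomm, ← Polynomial.map_map, hPmap, Polynomial.map_pow, Polynomial.map_sub,
      Polynomial.map_X, Polynomial.map_C]
    rfl
  letI : Algebra C (S ⊗[R] C) := ι.toAlgebra
  -- integrality of ι
  have hgen_int : ∀ s : S, (s ⊗ₜ[R] (1 : C)) ∈ integralClosure C (S ⊗[R] C) := by
    intro s
    obtain ⟨PC, hPCm, hPCmap⟩ := hGen s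
    refine ⟨PC, hPCm, ?_⟩
    rw [Polynomial.eval₂_eq_eval_map]
    show ((PC.map ι).eval _) = 0
    rw [hPCmap]
    simp [zero_pow hn.ne']
  have hxint : ∀ x : S ⊗[R] C, x ∈ integralClosure C (S ⊗[R] C) := by
    intro x
    induction x using TensorProduct.induction_on with
    | zero => exact zero_mem _
    | tmul s c =>
        have hsc : s ⊗ₜ[R] c = (s ⊗ₜ[R] (1 : C)) * ι c := by
          show _ = _ * ((1 : S) ⊗ₜ[R] c)
          rw [Algebra.TensorProduct.tmul_mul_tmul, mul_one, one_mul]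
        rw [hsc]
        exact mul_mem (hgen_int s) ((integralClosure C (S ⊗[R] C)).algebraMap_mem c)
    | add a b ha hb => exact add_mem ha hb
  have hIotaInt : ι.IsIntegral := fun x => hxint x
  have hclosed : IsClosedMap (PrimeSpectrum.comap ι) :=
    PrimeSpectrum.isClosedMap_comap_of_isIntegral ι hIotaInt
  -- injectivity on spectra
  have hSpecInj : Function.Injective (PrimeSpectrum.comap ι) := by
    intro x y hxy
    have hco : x.asIdeal.comap ι = y.asIdeal.comap ι := by
      have h1 := congrArg PrimeSpectrum.asIdeal hxy
      simpa [PrimeSpectrum.comap_asIdeal] using h1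
    obtain ⟨L, hLf, u1, u2, hucomm, hker1, hker2⟩ :=
      exists_two_homs ι x.asIdeal y.asIdeal x.isPrime y.isPrime hco
    letI := hLf
    have hu : u1 = u2 := by
      refine RingHom.ext fun t => ?_
      induction t using TensorProduct.induction_on with
      | zero => simp
      | add a b ha hb => rw [map_add, map_add, ha, hb]
      | tmul s c =>
          have hsc : s ⊗ₜ[R] c = (s ⊗ₜ[R] (1 : C)) * ι c := by
            show _ = _ * ((1 : S) ⊗ₜ[R] c)
            rw [Algebra.TensorProduct.tmul_mul_tmul, mul_one, one_mul]
          have hc : u1 (ι c) = u2 (ι c) := by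
            have h3 := RingHom.congr_fun hucomm c
            simpa using h3
          rw [hsc, map_mul, map_mul, hc]
          congr 1
          obtain ⟨PC, hPCm, hPCmap⟩ := hGen s
          have h1 : PC.map (u1.comp ι)
              = (Polynomial.X - Polynomial.C (u1 (s ⊗ₜ[R] (1 : C)))) ^ n := by
            rw [← Polynomial.map_map, hPCmap, Polynomial.map_pow, Polynomial.map_sub,
              Polynomial.map_X, Polynomial.map_C]
          have h2 : PC.map (u2.comp ι)
              = (Polynomial.X - Polynomial.C (u2 (s ⊗ₜ[R] (1 : C)))) ^ n := by
            rw [← Polynomial.map_map, hPCmap, Polynomial.map_pow, Polynomial.map_sub,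
              Polynomial.map_X, Polynomial.map_C]
          rw [hucomm] at h1
          obtain ⟨qL, hqL⟩ := ExpChar.exists L
          haveI := hqL
          exact lemA_inj qL hn (h1.symm.trans h2)
    refine PrimeSpectrum.ext ?_
    rw [← hker1, ← hker2, hu]
  -- surjectivity on spectra
  have hSpecSurj : Function.Surjective (PrimeSpectrum.comap ι) := by
    intro q'
    obtain ⟨Ω, hΩf, β, v, hcomp, hkerv⟩ :=
      exists_hom_pair φ hInj hInt g q'.asIdeal q'.isPrime
    letI := hΩf
    letI : Algebra R Ω := (v.comp g).toAlgebra
    set βA : S →ₐ[R] Ω := { β with commutes' := fun r => RingHom.congr_fun hcomp r } with hβA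
    set vA : C →ₐ[R] Ω := { v with commutes' := fun r => rfl } with hvA
    set w := Algebra.TensorProduct.productMap βA vA with hw
    haveI : (RingHom.ker w.toRingHom).IsPrime := RingHom.ker_isPrime _
    refine ⟨⟨RingHom.ker w.toRingHom, this⟩, ?_⟩
    refine PrimeSpectrum.ext ?_
    show (RingHom.ker w.toRingHom).comap ι = q'.asIdeal
    have hwι : ∀ c : C, w (ι c) = v c := by
      intro c
      show w ((1 : S) ⊗ₜ[R] c) = v c
      rw [Algebra.TensorProduct.productMap_apply_tmul, map_one, one_mul]
      rfl
    ext c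
    rw [Ideal.mem_comap]
    show w (ι c) = 0 ↔ c ∈ q'.asIdeal
    rw [hwι c, ← hkerv]
    rfl
  have hbij : Function.Bijective (PrimeSpectrum.comap ι) := ⟨hSpecInj, hSpecSurj⟩
  have hopen : IsOpenMap (PrimeSpectrum.comap ι) := by
    intro U hU
    have himg : (PrimeSpectrum.comap ι) '' U = ((PrimeSpectrum.comap ι) '' Uᶜ)ᶜ := by
      rw [Set.image_compl_eq hbij, compl_compl]
    rw [himg]
    exact (hclosed _ hU.isClosed_compl).isOpen_compl
  exact ⟨PrimeSpectrum.continuous_comap ι, hopen, hbij⟩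

/-- Let a finite group `G` act on a commutative ring `A` and let `B = A/I`
for a `G`-stable ideal `I` (the `G`-action on `A/I` is given as an instance, pinned by
`hact`).  Then the natural ring homomorphism `φ : A^G/I^G → B^G` is injective and integral,
the induced map `Spec (B^G) → Spec (A^G/I^G)` is bijective, all induced residue field
extensions are purely inseparable, and `φ` is a universal homeomorphism (i.e. every base
change of `φ` induces a homeomorphism on prime spectra). -/
theorem fixed_quotient_universal_homeomorphism (G A : Type*) [Group G] [Finite G] [CommRing A]
    [MulSemiringAction G A] (I : Ideal A) [MulSemiringAction G (A ⧸ I)]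
    (hact : ∀ (g : G) (a : A),
      g • (Ideal.Quotient.mk I a) = Ideal.Quotient.mk I (g • a))
    (φ : ((fixedSubring G A) ⧸ (I.comap (fixedSubring G A).subtype)) →+*
          fixedSubring G (A ⧸ I))
    (hφ : ∀ a : fixedSubring G A,
      (φ (Ideal.Quotient.mk (I.comap (fixedSubring G A).subtype) a) : A ⧸ I) =
        Ideal.Quotient.mk I (a : A)) :
    Function.Injective φ ∧
      φ.IsIntegral ∧
      Function.Bijective (PrimeSpectrum.comap φ) ∧
      (∀ (Q : Ideal (fixedSubring G (A ⧸ I))) (hQ : Q.IsPrime),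
        letI := hQ
        letI : Algebra (residueAt _ (Q.comap φ)) (residueAt _ Q) := (residueMap φ Q).toAlgebra
        IsPurelyInseparable (residueAt _ (Q.comap φ)) (residueAt _ Q)) ∧
      (∀ (C : Type*) [CommRing C]
        (g : ((fixedSubring G A) ⧸ (I.comap (fixedSubring G A).subtype)) →+* C),
        letI : Algebra ((fixedSubring G A) ⧸ (I.comap (fixedSubring G A).subtype)) C :=
          g.toAlgebra
        letI : Algebra ((fixedSubring G A) ⧸ (I.comap (fixedSubring G A).subtype))
            (fixedSubring G (A ⧸ I)) := φ.toAlgebra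
        IsHomeomorph (PrimeSpectrum.comap
          (Algebra.TensorProduct.includeRight
            (R := (fixedSubring G A) ⧸ (I.comap (fixedSubring G A).subtype))
            (A := fixedSubring G (A ⧸ I)) (B := C)).toRingHom)) := by
  classical
  letI : Fintype G := Fintype.ofFinite G
  have hn : 0 < Fintype.card G := Fintype.card_pos
  -- the key polynomial lemma
  have hKEY : ∀ b : fixedSubring G (A ⧸ I),
      ∃ P : Polynomial ((fixedSubring G A) ⧸ (I.comap (fixedSubring G A).subtype)),
      P.Monic ∧ P.map φ = (Polynomial.X - Polynomial.C b) ^ (Fintype.card G) := by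
    intro b
    obtain ⟨a, ha⟩ := Ideal.Quotient.mk_surjective (I := I) (b : A ⧸ I)
    set F : Polynomial A :=
      ∏ g : G, (Polynomial.X - Polynomial.C (g • a)) with hF
    have hFmonic : F.Monic :=
      Polynomial.monic_prod_of_monic _ _ fun _ _ => Polynomial.monic_X_sub_C _
    have hFsmul : ∀ h : G, h • F = F := by
      intro h
      rw [hF, Finset.smul_prod']
      rw [show (fun g : G => h • (Polynomial.X - Polynomial.C (g • a)))
          = fun g : G => Polynomial.X - Polynomial.C ((h * g) • a) from funext fun g => by
        rw [smul_sub, Polynomial.smul_X, Polynomial.smul_C, smul_smul]]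
      exact Fintype.prod_equiv (Equiv.mulLeft h) _ _ fun g => by simp
    have hFcoeff : ∀ i, F.coeff i ∈ fixedSubring G A := by
      intro i h
      rw [← Polynomial.coeff_smul, hFsmul h]
    have hcoeffs : (↑F.coeffs : Set A) ⊆ (fixedSubring G A : Set A) := by
      intro c hc
      obtain ⟨i, _, rfl⟩ := Polynomial.mem_coeffs_iff.1 hc
      exact hFcoeff i
    have hP₁monic : (F.toSubring _ hcoeffs).Monic := (Polynomial.monic_toSubring _ _ _).2 hFmonic
    have hP₁map : (F.toSubring _ hcoeffs).map (fixedSubring G A).subtype = F :=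
      Polynomial.map_toSubring _ _ _
    refine ⟨(F.toSubring _ hcoeffs).map
      (Ideal.Quotient.mk (I.comap (fixedSubring G A).subtype)), hP₁monic.map _, ?_⟩
    apply Polynomial.map_injective (fixedSubring G (A ⧸ I)).subtype Subtype.coe_injective
    rw [Polynomial.map_map, Polynomial.map_map]
    have hcomp : ((fixedSubring G (A ⧸ I)).subtype.comp φ).comp
        (Ideal.Quotient.mk (I.comap (fixedSubring G A).subtype))
        = (Ideal.Quotient.mk I).comp (fixedSubring G A).subtype :=
      RingHom.ext fun x => hφ x
    rw [hcomp, ← Polynomial.map_map, hP₁map]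
    have hfac : ∀ g : G, Ideal.Quotient.mk I (g • a) = (b : A ⧸ I) := by
      intro g
      rw [← hact g a, ha]
      exact b.2 g
    rw [hF, Polynomial.map_prod]
    have hfac2 : ∀ g : G, (Polynomial.X - Polynomial.C (g • a)).map (Ideal.Quotient.mk I)
        = Polynomial.X - Polynomial.C (b : A ⧸ I) := by
      intro g
      rw [Polynomial.map_sub, Polynomial.map_X, Polynomial.map_C, hfac g]
    rw [Finset.prod_congr rfl fun g _ => hfac2 g, Finset.prod_const, Finset.card_univ,
      Polynomial.map_pow, Polynomial.map_sub, Polynomial.map_X, Polynomial.map_C]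
    rfl
  -- injectivity of φ
  have hInj : Function.Injective φ := by
    rw [injective_iff_map_eq_zero]
    intro x hx
    obtain ⟨y, rfl⟩ := Ideal.Quotient.mk_surjective x
    have h1 : ((φ (Ideal.Quotient.mk (I.comap (fixedSubring G A).subtype) y) :
        fixedSubring G (A ⧸ I)) : A ⧸ I) = 0 := by
      rw [hx]; rfl
    rw [hφ y] at h1
    have h2 : (y : A) ∈ I := (Ideal.Quotient.eq_zero_iff_mem).1 h1
    exact (Ideal.Quotient.eq_zero_iff_mem).2 h2
  -- integrality of φ
  have hInt : φ.IsIntegral := by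
    intro b
    obtain ⟨P, hPm, hPmap⟩ := hKEY b
    refine ⟨P, hPm, ?_⟩
    rw [Polynomial.eval₂_eq_eval_map, hPmap]
    simp [zero_pow hn.ne']
  -- injectivity on prime spectra
  have hSpecLe : ∀ x y : PrimeSpectrum (fixedSubring G (A ⧸ I)),
      PrimeSpectrum.comap φ x = PrimeSpectrum.comap φ y → x.asIdeal ≤ y.asIdeal := by
    intro x y hxy b hb
    obtain ⟨P, hPm, hPmap⟩ := hKEY b
    have h0 : φ (P.coeff 0) = (-b) ^ (Fintype.card G) := by
      have h1 := congrArg (fun p => Polynomial.coeff p 0) hPmap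
      simp only [Polynomial.coeff_map] at h1
      rw [h1, Polynomial.coeff_zero_eq_eval_zero]
      simp
    have hmem1 : φ (P.coeff 0) ∈ x.asIdeal := by
      rw [h0]
      exact Ideal.pow_mem_of_mem _ (x.asIdeal.neg_mem hb) _ hn
    have hmem2 : P.coeff 0 ∈ x.asIdeal.comap φ := hmem1
    have hcomap : x.asIdeal.comap φ = y.asIdeal.comap φ := by
      have h1 := congrArg PrimeSpectrum.asIdeal hxy
      simpa [PrimeSpectrum.comap_asIdeal] using h1
    rw [hcomap] at hmem2
    have hmem3 : (-b) ^ (Fintype.card G) ∈ y.asIdeal := by rw [← h0]; exact hmem2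
    have hmem4 := y.isPrime.mem_of_pow_mem _ hmem3
    simpa using y.asIdeal.neg_mem hmem4
  have hSpecInjφ : Function.Injective (PrimeSpectrum.comap φ) := by
    intro x y hxy
    exact PrimeSpectrum.ext (le_antisymm (hSpecLe x y hxy) (hSpecLe y x hxy.symm))
  -- surjectivity on prime spectra
  have hSpecSurjφ : Function.Surjective (PrimeSpectrum.comap φ) := by
    intro q
    letI : Algebra ((fixedSubring G A) ⧸ (I.comap (fixedSubring G A).subtype))
      (fixedSubring G (A ⧸ I)) := φ.toAlgebra
    haveI : Algebra.IsIntegral ((fixedSubring G A) ⧸ (I.comap (fixedSubring G A).subtype))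
      (fixedSubring G (A ⧸ I)) := ⟨hInt⟩
    haveI := q.isPrime
    obtain ⟨Q, -, hQp, hQc⟩ := Ideal.exists_ideal_over_prime_of_isIntegral q.asIdeal ⊥
      (by
        intro x hx
        have h1 : φ x = 0 := by simp only [Ideal.mem_comap, Ideal.mem_bot] at hx; exact hx
        have h2 : x = 0 := hInj (by simpa using h1)
        simp [h2])
    exact ⟨⟨Q, hQp⟩, PrimeSpectrum.ext hQc⟩
  exact ⟨hInj, hInt, ⟨hSpecInjφ, hSpecSurjφ⟩,
    fun Q hQ => part4 φ hn hKEY Q hQ,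
    fun C _ g => part5 φ hn hKEY hInj hInt C g⟩
end

section
/- Let G be a finite group acting on a commutative ring A, and let B be a localisation of A such that the localisation map A → B is G-equivariant. If S ⊆ A is the set of elements of A that become invertible in B and S^G = S ∩ A^G, then B^G = (S^G)^{-1} A^G and B ≅ A ⊗_{A^G} B^G. -/
open scoped TensorProduct

attribute [local instance] Algebra.TensorProduct.rightAlgebra

set_option maxHeartbeats 1000000 in
set_option synthInstance.maxHeartbeats 400000 in
/-- Let `G` be a finite group acting on commutative rings `A` and `B` and let
`f : A → B` be a `G`-equivariant localisation of `A`.  Let `S ⊆ A` be the set of elements that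
become invertible in `B` and `S^G = S ∩ A^G`.  Then `B^G = (S^G)⁻¹ A^G` and
`B ≅ A ⊗_{A^G} B^G`. -/
theorem fixed_of_equivariant_localization (G A B : Type*) [Group G] [Finite G] [CommRing A]
    [CommRing B] [MulSemiringAction G A] [MulSemiringAction G B]
    (f : A →+* B) (hf : ∀ (g : G) (a : A), f (g • a) = g • f a)
    (M : Submonoid A) (hloc : @IsLocalization A _ M B _ f.toAlgebra)
    (S' : Submonoid (fixedSubring G A)) (hS' : ∀ a : fixedSubring G A, a ∈ S' ↔ IsUnit (f a))
    (f' : fixedSubring G A →+* fixedSubring G B)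
    (hf' : ∀ a : fixedSubring G A, (f' a : B) = f a) :
    (@IsLocalization (fixedSubring G A) _ S' (fixedSubring G B) _ f'.toAlgebra) ∧
      (letI : Algebra (fixedSubring G A) (fixedSubring G B) := f'.toAlgebra
        ∃ e : (TensorProduct (fixedSubring G A) A (fixedSubring G B)) ≃+* B,
          (∀ a : A, e (a ⊗ₜ 1) = f a) ∧ (∀ b : fixedSubring G B, e (1 ⊗ₜ b) = (b : B))) := by
  classical
  cases nonempty_fintype G
  letI : Algebra A B := f.toAlgebra
  haveI : IsLocalization M B := hloc
  letI : Algebra (fixedSubring G A) (fixedSubring G B) := f'.toAlgebra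
  -- basic facts about the "norm" ∏ h • m
  have smul_prod : ∀ (m : A) (g : G), g • (∏ h : G, h • m) = ∏ h : G, h • m := by
    intro m g
    have h1 : g • (∏ h : G, h • m) = ∏ h : G, g • (h • m) :=
      map_prod (MulSemiringAction.toRingHom G A g) _ _
    rw [h1]
    simp_rw [smul_smul]
    exact Fintype.prod_equiv (Equiv.mulLeft g) _ _ (fun h => rfl)
  have prod_dvd : ∀ m : A, ∃ r, (∏ h : G, h • m) = m * r := by
    intro m
    refine ⟨∏ h ∈ Finset.univ.erase (1:G), h • m, ?_⟩
    rw [← Finset.mul_prod_erase Finset.univ _ (Finset.mem_univ (1 : G)), one_smul]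
  have f_prod_unit : ∀ m : A, IsUnit (f m) → IsUnit (f (∏ h : G, h • m)) := by
    intro m hm
    rw [map_prod]
    refine Finset.prod_induction _ IsUnit (fun a b => IsUnit.mul) isUnit_one ?_
    intro h _
    rw [hf]
    exact hm.map (MulSemiringAction.toRingHom G B h)
  -- a fixed element of S' divisible by m
  have mkS' : ∀ m : A, IsUnit (f m) →
      ∃ t : fixedSubring G A, t ∈ S' ∧ ∃ r : A, (t : A) = m * r := by
    intro m hm
    exact ⟨⟨∏ h : G, h • m, smul_prod m⟩, (hS' _).mpr (f_prod_unit m hm), prod_dvd m⟩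
  -- units in the fixed subring of B
  have unitBg : ∀ x : fixedSubring G B, IsUnit ((x : B)) → IsUnit x := by
    intro x hx
    obtain ⟨u, hu⟩ := hx
    have hinv : ∀ g : G, g • ((u⁻¹ : Bˣ) : B) = ((u⁻¹ : Bˣ) : B) := by
      intro g
      have h1 : (g • ((u⁻¹ : Bˣ) : B)) * (x : B) = 1 := by
        calc (g • ((u⁻¹ : Bˣ) : B)) * (x : B)
            = (g • ((u⁻¹ : Bˣ) : B)) * (g • (x : B)) := by rw [x.2 g]
          _ = g • (((u⁻¹ : Bˣ) : B) * (x : B)) := (smul_mul' g _ _).symm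
          _ = g • (1 : B) := by rw [← hu, Units.inv_mul]
          _ = 1 := smul_one g
      calc g • ((u⁻¹ : Bˣ) : B)
          = (g • ((u⁻¹ : Bˣ) : B)) * ((x : B) * ((u⁻¹ : Bˣ) : B)) := by
            rw [← hu, Units.mul_inv, mul_one]
        _ = ((g • ((u⁻¹ : Bˣ) : B)) * (x : B)) * ((u⁻¹ : Bˣ) : B) := (mul_assoc _ _ _).symm
        _ = ((u⁻¹ : Bˣ) : B) := by rw [h1, one_mul]
    refine isUnit_iff_exists_inv.mpr ⟨⟨((u⁻¹ : Bˣ) : B), hinv⟩, ?_⟩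
    exact Subtype.ext (by show (x : B) * ((u⁻¹ : Bˣ) : B) = 1; rw [← hu, Units.mul_inv])
  -- cancellation trick
  have mul_prod_cancel : ∀ (c x y : A), c * x = c * y → ∀ r : A, (c * r) * x = (c * r) * y := by
    intro c x y h r
    rw [mul_right_comm c r x, h, mul_right_comm]
  -- fixing a numerator
  have fixnum : ∀ y : A, (∀ g : G, f (g • y) = f y) →
      ∃ d : A, (∀ g : G, g • d = d) ∧ IsUnit (f d) ∧ ∀ g : G, g • (d * y) = d * y := by
    intro y hy
    choose c hc using fun g : G =>
      IsLocalization.exists_of_eq (M := M) (S := B) (show (algebraMap A B) (g • y) =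
        (algebraMap A B) y from hy g)
    have hCunit : IsUnit (f (∏ g : G, (c g : A))) := by
      rw [map_prod]
      refine Finset.prod_induction _ IsUnit (fun a b => IsUnit.mul) isUnit_one ?_
      intro g _
      exact IsLocalization.map_units B (c g)
    have hC : ∀ g : G, (∏ g' : G, (c g' : A)) * (g • y) = (∏ g' : G, (c g' : A)) * y := by
      intro g
      have hsplit : (∏ g' : G, (c g' : A)) =
          (c g : A) * ∏ g' ∈ Finset.univ.erase g, (c g' : A) :=
        (Finset.mul_prod_erase _ _ (Finset.mem_univ g)).symm
      rw [hsplit]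
      exact mul_prod_cancel _ _ _ (hc g) _
    refine ⟨∏ h : G, h • (∏ g : G, (c g : A)), smul_prod _,
      f_prod_unit _ hCunit, ?_⟩
    intro g
    obtain ⟨r, hr⟩ := prod_dvd (∏ g : G, (c g : A))
    rw [smul_mul', smul_prod _ g, hr]
    exact mul_prod_cancel _ _ _ (hC g) _
  -- Part 1 : B^G is the localization of A^G at S'
  have part1 : @IsLocalization (fixedSubring G A) _ S' (fixedSubring G B) _ f'.toAlgebra := by
    refine { map_units := ?_, surj := ?_, exists_of_eq := ?_ }
    · rintro ⟨s, hs⟩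
      refine unitBg _ ?_
      rw [show ((algebraMap (fixedSubring G A) (fixedSubring G B)) s : B) = f s from hf' s]
      exact (hS' s).mp hs
    · intro z
      obtain ⟨⟨x, m⟩, hxm⟩ := IsLocalization.surj (M := M) (S := B) (z : B)
      obtain ⟨t, htS', rt, hrt⟩ := mkS' (m : A) (IsLocalization.map_units B m)
      have hfy : f (x * rt) = (z : B) * f (t : A) := by
        rw [hrt, map_mul, map_mul, show f x = (z : B) * f (m : A) from hxm.symm]
        ring
      have hyfix : ∀ g : G, f (g • (x * rt)) = f (x * rt) := by
        intro g
        rw [hf, hfy, smul_mul', z.2 g, ← hf, t.2 g]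
      obtain ⟨d, hdfix, hdunit, hdy⟩ := fixnum (x * rt) hyfix
      have htd : ∀ g : G, g • ((t : A) * d) = (t : A) * d := by
        intro g; rw [smul_mul', t.2 g, hdfix g]
      refine ⟨⟨⟨d * (x * rt), hdy⟩, ⟨⟨(t : A) * d, htd⟩, (hS' _).mpr ?_⟩⟩, ?_⟩
      · rw [map_mul]
        exact ((hS' t).mp htS').mul hdunit
      · refine Subtype.ext ?_
        show (z : B) * ((f' _ : fixedSubring G B) : B) = ((f' _ : fixedSubring G B) : B)
        rw [hf', hf']
        show (z : B) * f ((t : A) * d) = f (d * (x * rt))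
        rw [map_mul, map_mul, hfy]
        ring
    · intro x y h
      have hfxy : f (x : A) = f (y : A) := by
        rw [← hf' x, ← hf' y]
        exact congrArg (Subtype.val) h
      obtain ⟨c, hc⟩ := IsLocalization.exists_of_eq (M := M) (S := B) hfxy
      refine ⟨⟨⟨∏ h : G, h • (c : A), smul_prod _⟩,
        (hS' _).mpr (f_prod_unit _ (IsLocalization.map_units B c))⟩, ?_⟩
      refine Subtype.ext ?_
      show (∏ h : G, h • (c : A)) * (x : A) = (∏ h : G, h • (c : A)) * (y : A)
      obtain ⟨r, hr⟩ := prod_dvd (c : A)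
      rw [hr]
      exact mul_prod_cancel _ _ _ hc _
  refine ⟨part1, ?_⟩
  haveI := part1
  -- Part 2 : the tensor product isomorphism
  letI : Algebra (fixedSubring G A) B := (f.comp (algebraMap (fixedSubring G A) A)).toAlgebra
  haveI : IsScalarTower (fixedSubring G A) A B := IsScalarTower.of_algebraMap_eq (fun x => rfl)
  -- B is the localization of A at T := image of S'
  haveI locTB : IsLocalization (Algebra.algebraMapSubmonoid A S') B := by
    refine { map_units := ?_, surj := ?_, exists_of_eq := ?_ }
    · rintro ⟨_, s, hs, rfl⟩
      exact (hS' s).mp hs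
    · intro z
      obtain ⟨⟨x, m⟩, hxm⟩ := IsLocalization.surj (M := M) (S := B) z
      obtain ⟨t, htS', rt, hrt⟩ := mkS' (m : A) (IsLocalization.map_units B m)
      refine ⟨⟨x * rt, ⟨(t : A), ⟨t, htS', rfl⟩⟩⟩, ?_⟩
      show z * f (t : A) = f (x * rt)
      rw [hrt, map_mul, map_mul, show f x = z * f (m : A) from hxm.symm]
      ring
    · intro x y h
      obtain ⟨c, hc⟩ := IsLocalization.exists_of_eq (M := M) (S := B) h
      refine ⟨⟨∏ h : G, h • (c : A), ⟨⟨∏ h : G, h • (c : A), smul_prod _⟩,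
        (hS' _).mpr (f_prod_unit _ (IsLocalization.map_units B c)), rfl⟩⟩, ?_⟩
      show (∏ h : G, h • (c : A)) * x = (∏ h : G, h • (c : A)) * y
      obtain ⟨r, hr⟩ := prod_dvd (c : A)
      rw [hr]
      exact mul_prod_cancel _ _ _ hc _
  -- the tensor product is also the localization of A at T
  letI : Algebra (fixedSubring G B) (TensorProduct (fixedSubring G A) A (fixedSubring G B)) :=
    Algebra.TensorProduct.rightAlgebra
  haveI : IsScalarTower (fixedSubring G A) (fixedSubring G B)
      (TensorProduct (fixedSubring G A) A (fixedSubring G B)) :=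
    Algebra.TensorProduct.right_isScalarTower
  haveI pushout : Algebra.IsPushout (fixedSubring G A) (fixedSubring G B) A
      (TensorProduct (fixedSubring G A) A (fixedSubring G B)) := TensorProduct.isPushout'
  haveI : IsLocalizedModule S' (IsScalarTower.toAlgHom (fixedSubring G A) A
      (TensorProduct (fixedSubring G A) A (fixedSubring G B))).toLinearMap :=
    (isLocalizedModule_iff_isBaseChange S' (fixedSubring G B) _).mpr pushout.out
  haveI locT : IsLocalization (Algebra.algebraMapSubmonoid A S')
      (TensorProduct (fixedSubring G A) A (fixedSubring G B)) :=
    isLocalizedModule_iff_isLocalization.mp this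
  let e0 := IsLocalization.algEquiv (Algebra.algebraMapSubmonoid A S')
    (TensorProduct (fixedSubring G A) A (fixedSubring G B)) B
  refine ⟨e0.toRingEquiv, ?_, ?_⟩
  · intro a
    have h1 : (a ⊗ₜ[fixedSubring G A] (1 : fixedSubring G B)) =
        algebraMap A (TensorProduct (fixedSubring G A) A (fixedSubring G B)) a := rfl
    rw [h1]
    exact e0.commutes a
  · intro b
    obtain ⟨⟨x, s⟩, hxs⟩ := IsLocalization.surj (M := S') (S := fixedSubring G B) b
    have hs : IsUnit (f (((s : S') : fixedSubring G A) : A)) := (hS' _).mp s.2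
    refine hs.mul_right_cancel ?_
    have hcomm : ∀ a : A, e0 (algebraMap A (TensorProduct (fixedSubring G A) A
        (fixedSubring G B)) a) = f a := fun a => e0.commutes a
    calc e0.toRingEquiv ((1 : A) ⊗ₜ[fixedSubring G A] b) * f (((s : S') : fixedSubring G A) : A)
        = e0 (((1 : A) ⊗ₜ[fixedSubring G A] b) *
            algebraMap A (TensorProduct (fixedSubring G A) A (fixedSubring G B))
              (((s : S') : fixedSubring G A) : A)) := by rw [map_mul, hcomm]; rfl
      _ = e0 ((((s : S') : fixedSubring G A) : A) ⊗ₜ[fixedSubring G A] b) := by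
            rw [show algebraMap A (TensorProduct (fixedSubring G A) A (fixedSubring G B))
              (((s : S') : fixedSubring G A) : A) = (((s : S') : fixedSubring G A) : A)
                ⊗ₜ[fixedSubring G A] (1 : fixedSubring G B) from rfl,
              Algebra.TensorProduct.tmul_mul_tmul, one_mul, mul_one]
      _ = e0 ((1 : A) ⊗ₜ[fixedSubring G A] (f' x)) := by
            rw [show ((((s : S') : fixedSubring G A) : A)) =
                ((s : S') : fixedSubring G A) • (1 : A) by
                  rw [Algebra.smul_def, mul_one]; rfl,
              TensorProduct.smul_tmul,
              show ((s : S') : fixedSubring G A) • b = f' x by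
                rw [Algebra.smul_def]
                show f' (s : S') * b = f' x
                rw [mul_comm]
                exact hxs]
      _ = e0 (algebraMap A (TensorProduct (fixedSubring G A) A (fixedSubring G B)) ((x : A))) := by
            rw [show (f' x) = x • (1 : fixedSubring G B) by rw [Algebra.smul_def, mul_one]; rfl,
              ← TensorProduct.smul_tmul,
              show x • (1 : A) = ((x : A)) by rw [Algebra.smul_def, mul_one]; rfl]
            rfl
      _ = f (x : A) := hcomm _
      _ = (b : B) * f (((s : S') : fixedSubring G A) : A) := by
            have := congrArg (Subtype.val) hxs
            rw [show ((algebraMap (fixedSubring G A) (fixedSubring G B) x : fixedSubring G B) : B)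
              = f (x : A) from hf' x] at this
            rw [← this]
            show (b : B) * ((f' (s : S') : fixedSubring G B) : B) = _
            rw [hf']
end

section
/- For a finite group G acting on a commutative ring A and s an element of A that becomes invertible in a G-equivariant localisation, the element ∏_{g∈G} g(s) lies in A^G and is a product of s with other elements of A; consequently any G-equivariant localisation of A is a localisation at a multiplicative subset of A^G. -/
lemma norm_mem_fixed (G A : Type*) [Group G] [Fintype G] [CommRing A] [MulSemiringAction G A]
    (s : A) : (∏ g : G, g • s) ∈ fixedSubring G A := by
  intro h
  calc h • ∏ g : G, g • s = ∏ g : G, (h * g) • s := by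
        rw [Finset.smul_prod']; exact Finset.prod_congr rfl fun g _ => smul_smul h g s
    _ = ∏ g : G, g • s :=
        Fintype.prod_equiv (Equiv.mulLeft h) (fun g => (h * g) • s) (fun g => g • s)
          (fun g => rfl)

lemma norm_factor (G A : Type*) [Group G] [Fintype G] [CommRing A] [MulSemiringAction G A]
    (s : A) : ∃ t : A, (∏ g : G, g • s) = s * t := by
  classical
  refine ⟨∏ g ∈ Finset.univ.erase (1 : G), g • s, ?_⟩
  rw [← Finset.mul_prod_erase Finset.univ (fun g : G => g • s) (Finset.mem_univ 1), one_smul]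

/-- For a finite group `G` acting on a commutative ring `A` and an element
`s ∈ A` that becomes invertible in a `G`-equivariant localisation `B` of `A`, the element
`∏_{g ∈ G} g(s)` lies in `A^G` and is a product of `s` with another element of `A`; consequently
the `G`-equivariant localisation `B` of `A` is a localisation at a multiplicative subset
of `A^G`. -/
theorem equivariant_localization_at_invariants (G A B : Type*) [Group G] [Fintype G]
    [CommRing A] [CommRing B] [MulSemiringAction G A] [MulSemiringAction G B]
    (f : A →+* B) (hf : ∀ (g : G) (a : A), f (g • a) = g • f a)
    (M : Submonoid A) (hloc : @IsLocalization A _ M B _ f.toAlgebra) :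
    (∀ s : A, IsUnit (f s) →
      (∏ g : G, g • s) ∈ fixedSubring G A ∧ ∃ t : A, (∏ g : G, g • s) = s * t) ∧
      ∃ N : Submonoid A, (N : Set A) ⊆ (fixedSubring G A : Set A) ∧
        @IsLocalization A _ N B _ f.toAlgebra := by
  letI := f.toAlgebra
  haveI := hloc
  have halg : (algebraMap A B) = f := rfl
  refine ⟨fun s _ => ⟨norm_mem_fixed G A s, norm_factor G A s⟩, ?_⟩
  -- N : invariant elements whose image is a unit
  refine ⟨{ carrier := {a | a ∈ fixedSubring G A ∧ IsUnit (f a)},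
            one_mem' := ⟨(fixedSubring G A).one_mem, by simp⟩,
            mul_mem' := fun ha hb => ⟨(fixedSubring G A).mul_mem ha.1 hb.1,
              by rw [map_mul]; exact ha.2.mul hb.2⟩ }, fun a ha => ha.1, ?_⟩
  -- norms of elements of M live in N
  have hnorm : ∀ m : A, IsUnit (f m) → (∏ g : G, g • m) ∈ fixedSubring G A ∧
      IsUnit (f (∏ g : G, g • m)) := by
    intro m hm
    refine ⟨norm_mem_fixed G A m, ?_⟩
    rw [map_prod]
    exact Finset.prod_induction _ IsUnit (fun a b => IsUnit.mul) isUnit_one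
      (fun g _ => by rw [hf]; exact IsUnit.map (MulSemiringAction.toRingHom G B g) hm)
  constructor
  constructor
  · rintro ⟨n, hn⟩
    exact hn.2
  · intro b
    obtain ⟨⟨a, m⟩, hs⟩ := IsLocalization.surj (M := M) b
    have hmunit : IsUnit (f (m : A)) := IsLocalization.map_units B m
    obtain ⟨t, ht⟩ := norm_factor G A (m : A)
    refine ⟨⟨a * t, ⟨∏ g : G, g • (m : A), hnorm _ hmunit⟩⟩, ?_⟩
    simp only [halg] at hs ⊢
    rw [ht, map_mul, map_mul, ← mul_assoc, hs]
  · intro a₁ a₂ h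
    obtain ⟨m, hm⟩ := IsLocalization.exists_of_eq (M := M) (by exact h)
    obtain ⟨t, ht⟩ := norm_factor G A (m : A)
    refine ⟨⟨∏ g : G, g • (m : A), hnorm _ (IsLocalization.map_units B m)⟩, ?_⟩
    show (∏ g : G, g • (m : A)) * a₁ = (∏ g : G, g • (m : A)) * a₂
    rw [ht, mul_assoc, mul_assoc, mul_comm t a₁, mul_comm t a₂, ← mul_assoc, ← mul_assoc, hm]
end
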